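/- Let m and s be positive integers with s ≤ m, and let A = {a ∈ {0,1}^m : Σ_{j=1}^m a_j ≤ s}. Then there exists a subset A_s ⊆ A of cardinality at least (C(m,s) − 2)/(C(m,⌊s/2⌋)·2^{s/2}) such that any two distinct elements a, b ∈ A_s satisfy ‖a − b‖₂ > √(s/2); that is, the √(s/2)-packing number of A in the Euclidean metric is at least (C(m,s) − 2)/(C(m,⌊s/2⌋)·2^{s/2}). -/

import Mathlib

open Finset

private def chiFn {m : ℕ} (T : Finset (Fin m)) : Fin m → ℝ := fun j => if j ∈ T then 1 else 0

private lemma chiFn_inj {m : ℕ} : Function.Injective (chiFn (m := m)) := by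
  intro T U h
  ext j
  have h' := congrFun h j
  simp only [chiFn] at h'
  by_cases hT : j ∈ T <;> by_cases hU : j ∈ U <;> simp_all

private lemma chiFn_sum {m : ℕ} (T : Finset (Fin m)) : ∑ j, chiFn T j = (T.card : ℝ) := by
  simp [chiFn, Finset.sum_ite_mem]

private lemma chiFn_dist {m : ℕ} (T U : Finset (Fin m)) :
    ∑ j, (chiFn T j - chiFn U j) ^ 2 = ((symmDiff T U).card : ℝ) := by
  have h : ∀ j, (chiFn T j - chiFn U j) ^ 2 = if j ∈ symmDiff T U then (1 : ℝ) else 0 := by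
    intro j
    simp only [chiFn, Finset.mem_symmDiff]
    by_cases hT : j ∈ T <;> by_cases hU : j ∈ U <;> simp [hT, hU]
  rw [Finset.sum_congr rfl fun j _ => h j]
  simp [Finset.sum_ite_mem]

private lemma chiFn_ones {m : ℕ} (U : Finset (Fin m)) :
    univ.filter (fun j => chiFn U j = 1) = U := by
  ext j
  simp only [chiFn, mem_filter, mem_univ, true_and]
  by_cases hU : j ∈ U <;> simp [hU]

private lemma choose_mono_half (m : ℕ) : ∀ t, 2 * t ≤ m → ∀ j ≤ t, m.choose j ≤ m.choose t := by
  intro t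
  induction t with
  | zero => intro _ j hj; interval_cases j; exact le_rfl
  | succ t ih =>
    intro h2 j hj
    rcases Nat.eq_or_lt_of_le hj with rfl | hlt
    · exact le_rfl
    · have hj' : j ≤ t := Nat.lt_succ_iff.mp hlt
      have h1 := ih (by omega) j hj'
      have hstep : m.choose t ≤ m.choose (t + 1) := by
        apply Nat.choose_le_succ_of_lt_half_left
        have : t + 1 ≤ m / 2 := (Nat.le_div_iff_mul_le (by norm_num)).mpr (by omega)
        omega
      omega

/-- packing number for binary sets.  Within
`A = {a ∈ {0,1}^m : Σ_j a_j ≤ s}` there is a subset `As` of cardinality at least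
`(C(m,s) − 2)/(C(m,⌊s/2⌋)·2^{s/2})` whose distinct elements are pairwise at
Euclidean distance greater than `√(s/2)`. -/
theorem binary_packing (m s : ℕ) (hs : 0 < s) (hsm : s ≤ m) :
    ∃ As : Finset (Fin m → ℝ),
      (∀ a ∈ As, (∀ j, a j = 0 ∨ a j = 1) ∧ (∑ j, a j) ≤ (s : ℝ)) ∧
      ((m.choose s : ℝ) - 2) / ((m.choose (s / 2) : ℝ) * (2 : ℝ) ^ ((s : ℝ) / 2))
        ≤ (As.card : ℝ) ∧
      (∀ a ∈ As, ∀ b ∈ As, a ≠ b →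
        Real.sqrt ((s : ℝ) / 2) < Real.sqrt (∑ j, (a j - b j) ^ 2)) := by
  classical
  set t := s / 2 with htdef
  have h2t : 2 * t ≤ s := by omega
  -- the set of binary vectors of weight exactly s
  set S : Finset (Fin m → ℝ) := (univ.powersetCard s).image chiFn with hSdef
  have hScard : S.card = m.choose s := by
    rw [hSdef, card_image_of_injective _ chiFn_inj, card_powersetCard, card_univ,
      Fintype.card_fin]
  -- symmetry of the squared distance
  have hsym : ∀ a b : Fin m → ℝ, ∑ j, (a j - b j) ^ 2 = ∑ j, (b j - a j) ^ 2 :=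
    fun a b => Finset.sum_congr rfl fun j _ => by ring
  -- a maximal packing
  set P : Finset (Finset (Fin m → ℝ)) :=
    S.powerset.filter (fun A => ∀ a ∈ A, ∀ b ∈ A, a ≠ b → (s : ℝ) / 2 < ∑ j, (a j - b j) ^ 2)
    with hPdef
  have hPne : P.Nonempty := ⟨∅, by simp [hPdef]⟩
  obtain ⟨As, hAsP, hmax⟩ := P.exists_max_image Finset.card hPne
  rw [hPdef, mem_filter, mem_powerset] at hAsP
  obtain ⟨hAsS, hAspack⟩ := hAsP
  -- covering property from maximality
  have hcover : ∀ x ∈ S, ∃ a ∈ As, ∑ j, (x j - a j) ^ 2 ≤ (s : ℝ) / 2 := by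
    intro x hx
    by_contra hcon
    push_neg at hcon
    have hxnot : x ∉ As := by
      intro hxA
      have h0 : ∑ j, (x j - x j) ^ 2 = 0 := by simp
      have := hcon x hxA
      rw [h0] at this
      have : (0 : ℝ) < (s : ℝ) / 2 := by positivity
      linarith [hcon x hxA, h0 ▸ (hcon x hxA)]
    have hins : insert x As ∈ P := by
      rw [hPdef, mem_filter, mem_powerset]
      constructor
      · exact insert_subset hx hAsS
      · intro a ha b hb hab
        rcases mem_insert.mp ha with rfl | haA
        · rcases mem_insert.mp hb with rfl | hbA
          · exact absurd rfl hab
          · exact hcon b hbA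
        · rcases mem_insert.mp hb with rfl | hbA
          · rw [hsym]; exact hcon a haA
          · exact hAspack a haA b hbA hab
    have := hmax _ hins
    rw [card_insert_of_notMem hxnot] at this
    omega
  -- ball bound
  have hball : ∀ a ∈ As,
      (S.filter (fun x => ∑ j, (x j - a j) ^ 2 ≤ (s : ℝ) / 2)).card ≤ (t + 1) * m.choose t := by
    intro a haA
    obtain ⟨T, hTmem, rfl⟩ := mem_image.mp (hAsS haA)
    set B := S.filter (fun x => ∑ j, (x j - chiFn T j) ^ 2 ≤ (s : ℝ) / 2) with hBdef
    have hBle : B.card ≤ ((range (t + 1)).biUnion (fun j => (univ : Finset (Fin m)).powersetCard j)).card := by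
      apply Finset.card_le_card_of_injOn
        (fun x => symmDiff (univ.filter (fun j => x j = 1)) T)
      · intro x hx
        simp only [Finset.mem_coe] at hx ⊢
        rw [mem_filter] at hx
        obtain ⟨hxS, hxd⟩ := hx
        obtain ⟨U, hUmem, rfl⟩ := mem_image.mp hxS
        rw [chiFn_ones]
        have hd : ((symmDiff U T).card : ℝ) ≤ (s : ℝ) / 2 := by
          rw [← chiFn_dist]; exact hxd
        have hd' : (symmDiff U T).card ≤ t := by
          have hd2 : 2 * ((symmDiff U T).card : ℝ) ≤ (s : ℝ) := by linarith
          have hd3 : 2 * (symmDiff U T).card ≤ s := by exact_mod_cast hd2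
          omega
        refine mem_biUnion.mpr ⟨(symmDiff U T).card, mem_range.mpr (by omega), ?_⟩
        exact mem_powersetCard_univ.mpr rfl
      · intro x hx y hy hxy
        have hx' := Finset.mem_coe.mp hx
        have hy' := Finset.mem_coe.mp hy
        rw [hBdef, mem_filter] at hx' hy'
        obtain ⟨U, _, rfl⟩ := mem_image.mp hx'.1
        obtain ⟨V, _, rfl⟩ := mem_image.mp hy'.1
        simp only [chiFn_ones] at hxy
        have : U = V := by
          have := congrArg (fun D => symmDiff D T) hxy
          simpa [symmDiff_symmDiff_cancel_right] using this
        rw [this]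
    refine hBle.trans ?_
    refine (Finset.card_biUnion_le).trans ?_
    calc ∑ j ∈ range (t + 1), (univ.powersetCard j).card
        = ∑ j ∈ range (t + 1), m.choose j := by
          refine Finset.sum_congr rfl fun j _ => ?_
          rw [card_powersetCard, card_univ, Fintype.card_fin]
      _ ≤ ∑ _j ∈ range (t + 1), m.choose t := by
          refine Finset.sum_le_sum fun j hj => ?_
          have hj' := mem_range.mp hj
          exact choose_mono_half m t (by omega) j (by omega)
      _ = (t + 1) * m.choose t := by rw [Finset.sum_const, card_range, smul_eq_mul]
  -- counting
  have hSsub : S ⊆ As.biUnion (fun a => S.filter (fun x => ∑ j, (x j - a j) ^ 2 ≤ (s : ℝ) / 2)) := by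
    intro x hx
    obtain ⟨a, haA, hd⟩ := hcover x hx
    exact mem_biUnion.mpr ⟨a, haA, mem_filter.mpr ⟨hx, hd⟩⟩
  have hcount : m.choose s ≤ As.card * ((t + 1) * m.choose t) := by
    calc m.choose s = S.card := hScard.symm
      _ ≤ _ := Finset.card_le_card hSsub
      _ ≤ ∑ a ∈ As, (S.filter (fun x => ∑ j, (x j - a j) ^ 2 ≤ (s : ℝ) / 2)).card :=
          Finset.card_biUnion_le
      _ ≤ ∑ _a ∈ As, (t + 1) * m.choose t := Finset.sum_le_sum hball
      _ = As.card * ((t + 1) * m.choose t) := by rw [Finset.sum_const, smul_eq_mul]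
  refine ⟨As, ?_, ?_, ?_⟩
  · intro a haA
    obtain ⟨T, hTmem, rfl⟩ := mem_image.mp (hAsS haA)
    constructor
    · intro j
      by_cases h : j ∈ T <;> simp [chiFn, h]
    · rw [chiFn_sum, (mem_powersetCard.mp hTmem).2]
  · -- cardinality bound
    have htm : t ≤ m := by omega
    have hct : (0 : ℝ) < (m.choose t : ℝ) := by exact_mod_cast Nat.choose_pos htm
    have hrp : (0 : ℝ) < (2 : ℝ) ^ ((s : ℝ) / 2) := Real.rpow_pos_of_pos (by norm_num) _
    have hD : (0 : ℝ) < (m.choose t : ℝ) * (2 : ℝ) ^ ((s : ℝ) / 2) := mul_pos hct hrp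
    rw [div_le_iff₀ hD]
    have h1 : ((t : ℝ) + 1) ≤ (2 : ℝ) ^ ((s : ℝ) / 2) := by
      have ha : ((t : ℝ) + 1) ≤ (2 : ℝ) ^ (t : ℕ) := by
        exact_mod_cast Nat.succ_le_of_lt (Nat.lt_two_pow_self (n := t))
      have hb : (2 : ℝ) ^ (t : ℕ) = (2 : ℝ) ^ ((t : ℝ)) := (Real.rpow_natCast 2 t).symm
      have hc : (2 : ℝ) ^ ((t : ℝ)) ≤ (2 : ℝ) ^ ((s : ℝ) / 2) := by
        apply Real.rpow_le_rpow_of_exponent_le (by norm_num)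
        have : (2 : ℝ) * (t : ℝ) ≤ (s : ℝ) := by exact_mod_cast h2t
        linarith
      linarith [ha, hb ▸ hc]
    have h2 : (m.choose s : ℝ) ≤ (As.card : ℝ) * (((t : ℝ) + 1) * (m.choose t : ℝ)) := by
      exact_mod_cast hcount
    have h3 : (As.card : ℝ) * (((t : ℝ) + 1) * (m.choose t : ℝ))
        ≤ (As.card : ℝ) * ((2 : ℝ) ^ ((s : ℝ) / 2) * (m.choose t : ℝ)) := by
      gcongr
    have : ((m.choose s : ℝ) - 2) ≤ (m.choose s : ℝ) := by linarith
    calc ((m.choose s : ℝ) - 2) ≤ (m.choose s : ℝ) := this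
      _ ≤ (As.card : ℝ) * ((2 : ℝ) ^ ((s : ℝ) / 2) * (m.choose t : ℝ)) := le_trans h2 h3
      _ = (As.card : ℝ) * ((m.choose t : ℝ) * (2 : ℝ) ^ ((s : ℝ) / 2)) := by ring
  · intro a haA b hbA hab
    exact Real.sqrt_lt_sqrt (by positivity) (hAspack a haA b hbA hab)
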